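/- Let n ≥ 2, let H be a proper nonzero linear subspace of ℝⁿ and let K ∈ 𝒦ⁿ. Then λₙ(F_H K) ≥ λₙ(K), where F_H is the fiber symmetrization with respect to H and λₙ is n-dimensional Lebesgue measure. -/

import Mathlib

open Filter Topology Metric Set Pointwise MeasureTheory

noncomputable section

abbrev Euc (n : ℕ) := EuclideanSpace ℝ (Fin n)

def IsConvexBody {n : ℕ} (K : Set (Euc n)) : Prop :=
  K.Nonempty ∧ IsCompact K ∧ Convex ℝ K

def reflMap {n : ℕ} (H : Submodule ℝ (Euc n)) : Euc n → Euc n :=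
  (H.reflection : Euc n ≃ₗᵢ[ℝ] Euc n)

/-- Fiber symmetrization with respect to the subspace `H`: every fiber `K ∩ (H^⊥ + x)`,
`x ∈ H`, is replaced by its central Minkowski symmetrization within that fiber. -/
def fiber {n : ℕ} (H : Submodule ℝ (Euc n)) (K : Set (Euc n)) : Set (Euc n) :=
  ⋃ x ∈ (H : Set (Euc n)),
    (2⁻¹ : ℝ) • ((K ∩ ((Hᗮ : Set (Euc n)) + {x})) +
      reflMap H '' (K ∩ ((Hᗮ : Set (Euc n)) + {x})))

variable {n : ℕ}

open Submodule

/-- `E`-valued orthogonal projection. -/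
def PH (H : Submodule ℝ (Euc n)) : Euc n → Euc n := fun y => H.starProjection y

lemma PH_add (H : Submodule ℝ (Euc n)) (a b : Euc n) : PH H (a + b) = PH H a + PH H b := by
  simp [PH]

lemma PH_mem_self (H : Submodule ℝ (Euc n)) {x : Euc n} (hx : x ∈ H) : PH H x = x := by
  simp [PH, starProjection_eq_self_iff.2 hx]

lemma PH_mem (H : Submodule ℝ (Euc n)) (y : Euc n) : PH H y ∈ H := (orthogonalProjection H y).2

lemma PH_orth (H : Submodule ℝ (Euc n)) {u : Euc n} (hu : u ∈ Hᗮ) : PH H u = 0 := by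
  simp [PH, (starProjection_apply_eq_zero_iff H).2 hu]

lemma mem_coset_iff (H : Submodule ℝ (Euc n)) {x : Euc n} (hx : x ∈ H) (a : Euc n) :
    a ∈ (Hᗮ : Set (Euc n)) + {x} ↔ PH H a = x := by
  constructor
  · rintro ⟨u, hu, t, ht, rfl⟩
    simp only [Set.mem_singleton_iff] at ht
    subst ht
    rw [PH_add, PH_orth H hu, PH_mem_self H hx, zero_add]
  · intro h
    refine ⟨a - x, ?_, x, rfl, by show a - x + x = a; rw [sub_add_cancel]⟩
    show a - x ∈ Hᗮ
    rw [← starProjection_apply_eq_zero_iff (K := H)]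
    rw [map_sub]
    push_cast
    show PH H a - PH H x = 0
    rw [h, PH_mem_self H hx, sub_self]

lemma mem_fiber_iff (H : Submodule ℝ (Euc n)) (K : Set (Euc n)) (z : Euc n) :
    z ∈ fiber H K ↔ ∃ a b, a ∈ K ∧ b ∈ K ∧ PH H a = PH H b ∧
      z = (2⁻¹ : ℝ) • (a + reflMap H b) := by
  constructor
  · intro hz
    simp only [fiber, Set.mem_iUnion] at hz
    obtain ⟨x, hx, hz⟩ := hz
    obtain ⟨w, hw, rfl⟩ := hz
    obtain ⟨a, ha, b', hb', rfl⟩ := hw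
    obtain ⟨b, hb, rfl⟩ := hb'
    refine ⟨a, b, ha.1, hb.1, ?_, rfl⟩
    rw [(mem_coset_iff H hx a).1 ha.2, (mem_coset_iff H hx b).1 hb.2]
  · rintro ⟨a, b, ha, hb, hab, rfl⟩
    simp only [fiber, Set.mem_iUnion]
    refine ⟨PH H a, PH_mem H a, ?_⟩
    refine ⟨a + reflMap H b, ⟨a, ⟨ha, (mem_coset_iff H (PH_mem H a) a).2 rfl⟩,
      reflMap H b, ⟨b, ⟨hb, (mem_coset_iff H (PH_mem H a) b).2 hab.symm⟩, rfl⟩, rfl⟩, rfl⟩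

lemma PH_smul (H : Submodule ℝ (Euc n)) (c : ℝ) (a : Euc n) : PH H (c • a) = c • PH H a := by
  simp [PH]

lemma continuous_PH (H : Submodule ℝ (Euc n)) : Continuous (PH H) :=
  (H.starProjection).continuous

/-- The linear map `(a, b) ↦ (a + R b)/2`. -/
def TH (H : Submodule ℝ (Euc n)) : Euc n × Euc n →ₗ[ℝ] Euc n :=
  (2⁻¹ : ℝ) • (LinearMap.fst ℝ (Euc n) (Euc n) +
    ((reflection H).toLinearEquiv.toLinearMap).comp (LinearMap.snd ℝ (Euc n) (Euc n)))

lemma TH_apply (H : Submodule ℝ (Euc n)) (p : Euc n × Euc n) :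
    TH H p = (2⁻¹ : ℝ) • (p.1 + reflMap H p.2) := rfl

def DH (H : Submodule ℝ (Euc n)) (K : Set (Euc n)) : Set (Euc n × Euc n) :=
  (K ×ˢ K) ∩ {p | PH H p.1 = PH H p.2}

lemma fiber_eq_image (H : Submodule ℝ (Euc n)) (K : Set (Euc n)) :
    fiber H K = TH H '' DH H K := by
  ext z
  rw [mem_fiber_iff]
  constructor
  · rintro ⟨a, b, ha, hb, hab, rfl⟩
    exact ⟨(a, b), ⟨⟨ha, hb⟩, hab⟩, rfl⟩
  · rintro ⟨⟨a, b⟩, ⟨⟨ha, hb⟩, hab⟩, rfl⟩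
    exact ⟨a, b, ha, hb, hab, rfl⟩

lemma convex_fiber (H : Submodule ℝ (Euc n)) {K : Set (Euc n)} (hK : Convex ℝ K) :
    Convex ℝ (fiber H K) := by
  rw [fiber_eq_image]
  refine Convex.linear_image ?_ _
  refine Convex.inter (hK.prod hK) ?_
  intro p hp q hq s t hs ht hst
  simp only [Set.mem_setOf_eq] at *
  show PH H (s • p + t • q).1 = PH H (s • p + t • q).2
  simp only [Prod.fst_add, Prod.snd_add, Prod.smul_fst, Prod.smul_snd]
  rw [PH_add, PH_add, PH_smul, PH_smul, PH_smul, PH_smul, hp, hq]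

lemma isCompact_fiber (H : Submodule ℝ (Euc n)) {K : Set (Euc n)} (hK : IsCompact K) :
    IsCompact (fiber H K) := by
  rw [fiber_eq_image]
  refine IsCompact.image ?_ (LinearMap.continuous_of_finiteDimensional _)
  refine (hK.prod hK).inter_right ?_
  exact isClosed_eq ((continuous_PH H).comp continuous_fst)
    ((continuous_PH H).comp continuous_snd)

lemma fiber_mono (H : Submodule ℝ (Euc n)) {K K' : Set (Euc n)} (h : K ⊆ K') :
    fiber H K ⊆ fiber H K' := by
  intro z hz
  rw [mem_fiber_iff] at *
  obtain ⟨a, b, ha, hb, hab, rfl⟩ := hz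
  exact ⟨a, b, h ha, h hb, hab, rfl⟩

open RealInnerProductSpace

lemma reflMap_add (H : Submodule ℝ (Euc n)) (a b : Euc n) :
    reflMap H (a + b) = reflMap H a + reflMap H b := map_add (reflection H) a b

lemma reflMap_smul (H : Submodule ℝ (Euc n)) (c : ℝ) (a : Euc n) :
    reflMap H (c • a) = c • reflMap H a := map_smul (reflection H) c a

lemma reflMap_sub (H : Submodule ℝ (Euc n)) (a b : Euc n) :
    reflMap H (a - b) = reflMap H a - reflMap H b := map_sub (reflection H) a b

lemma reflMap_reflMap (H : Submodule ℝ (Euc n)) (y : Euc n) :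
    reflMap H (reflMap H y) = y := reflection_reflection H y

lemma reflMap_orthmem (H : Submodule ℝ (Euc n)) {e : Euc n} (heH : e ∈ Hᗮ) :
    reflMap H e = -e := reflection_mem_subspace_orthogonalComplement_eq_neg heH

lemma inner_reflMap (H : Submodule ℝ (Euc n)) (x y : Euc n) :
    ⟪reflMap H x, reflMap H y⟫ = ⟪x, y⟫ := (reflection H).inner_map_map x y

lemma inner_e_reflMap (H : Submodule ℝ (Euc n)) {e : Euc n} (heH : e ∈ Hᗮ) (y : Euc n) :
    ⟪e, reflMap H y⟫ = -⟪e, y⟫ := by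
  have : ⟪e, reflMap H y⟫ = ⟪reflMap H e, reflMap H (reflMap H y)⟫ :=
    (inner_reflMap H e (reflMap H y)).symm
  rw [this, reflMap_reflMap, reflMap_orthmem H heH, inner_neg_left]

lemma PH_line (e : Euc n) (he : ‖e‖ = 1) (y : Euc n) :
    PH (ℝ ∙ e)ᗮ y = y - ⟪e, y⟫ • e := by
  simp only [PH, starProjection_orthogonal_val, starProjection_singleton, he]
  norm_num

lemma reflMap_line (e : Euc n) (he : ‖e‖ = 1) (y : Euc n) :
    reflMap (ℝ ∙ e)ᗮ y = y - (2 * ⟪e, y⟫) • e := by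
  have : reflMap (ℝ ∙ e)ᗮ y = 2 • PH (ℝ ∙ e)ᗮ y - y := reflection_apply y
  rw [this, PH_line e he]
  rw [two_smul]
  rw [two_mul, add_smul]
  abel

lemma PH_line_mem (e : Euc n) (he : ‖e‖ = 1) (y : Euc n) :
    ⟪e, PH (ℝ ∙ e)ᗮ y⟫ = 0 := by
  rw [PH_line e he, inner_sub_right, real_inner_smul_right,
    real_inner_self_eq_norm_sq, he]
  ring

lemma reflMap_comm (H : Submodule ℝ (Euc n)) {e : Euc n} (he : ‖e‖ = 1) (heH : e ∈ Hᗮ)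
    (y : Euc n) :
    reflMap H (reflMap (ℝ ∙ e)ᗮ y) = reflMap (ℝ ∙ e)ᗮ (reflMap H y) := by
  rw [reflMap_line e he, reflMap_line e he, reflMap_sub, reflMap_smul,
    reflMap_orthmem H heH, inner_e_reflMap H heH]
  rw [smul_neg, mul_neg, neg_smul]

lemma PH_reflMap_line (H : Submodule ℝ (Euc n)) {e : Euc n} (he : ‖e‖ = 1) (heH : e ∈ Hᗮ)
    (y : Euc n) : PH H (reflMap (ℝ ∙ e)ᗮ y) = PH H y := by
  rw [reflMap_line e he]
  have : PH H (y - (2 * ⟪e, y⟫) • e) = PH H y - (2 * ⟪e, y⟫) • PH H e := by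
    simp [PH]
  rw [this, PH_orth H heH, smul_zero, sub_zero]

lemma half_smul_add_self (x : Euc n) : (2⁻¹ : ℝ) • (x + x) = x := by
  rw [← two_smul ℝ x, smul_smul]
  norm_num

lemma PH_of_PH_line (H : Submodule ℝ (Euc n)) {e : Euc n} (he : ‖e‖ = 1) (heH : e ∈ Hᗮ)
    (y : Euc n) : PH H (PH (ℝ ∙ e)ᗮ y) = PH H y := by
  rw [PH_line e he]
  have : PH H (y - ⟪e, y⟫ • e) = PH H y - ⟪e, y⟫ • PH H e := by simp [PH]
  rw [this, PH_orth H heH, smul_zero, sub_zero]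

lemma PH_line_reflMap (H : Submodule ℝ (Euc n)) {e : Euc n} (he : ‖e‖ = 1) (heH : e ∈ Hᗮ)
    (y : Euc n) : PH (ℝ ∙ e)ᗮ (reflMap H y) = reflMap H y + ⟪e, y⟫ • e := by
  rw [PH_line e he, inner_e_reflMap H heH, neg_smul, sub_neg_eq_add]

lemma fiber_fiber_subset (H : Submodule ℝ (Euc n)) {e : Euc n} (he : ‖e‖ = 1) (heH : e ∈ Hᗮ)
    (K : Set (Euc n)) :
    fiber H (fiber (ℝ ∙ e)ᗮ K) ⊆ fiber (ℝ ∙ e)ᗮ (fiber H K) := by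
  intro z hz
  rw [mem_fiber_iff] at hz
  obtain ⟨a, b, ha, hb, hab, rfl⟩ := hz
  rw [mem_fiber_iff] at ha hb
  obtain ⟨p₁, p₂, hp₁, hp₂, hp, rfl⟩ := ha
  obtain ⟨q₁, q₂, hq₁, hq₂, hq, rfl⟩ := hb
  have hPp : PH H p₁ = PH H p₂ := by
    rw [← PH_of_PH_line H he heH p₁, hp, PH_of_PH_line H he heH]
  have hQq : PH H q₁ = PH H q₂ := by
    rw [← PH_of_PH_line H he heH q₁, hq, PH_of_PH_line H he heH]
  have key1 : PH H p₁ = PH H q₁ := by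
    have h1 : PH H ((2⁻¹ : ℝ) • (p₁ + reflMap (ℝ ∙ e)ᗮ p₂)) = PH H p₁ := by
      rw [PH_smul, PH_add, PH_reflMap_line H he heH, ← hPp, half_smul_add_self]
    have h2 : PH H ((2⁻¹ : ℝ) • (q₁ + reflMap (ℝ ∙ e)ᗮ q₂)) = PH H q₁ := by
      rw [PH_smul, PH_add, PH_reflMap_line H he heH, ← hQq, half_smul_add_self]
    rw [← h1, ← h2]
    exact hab
  have key2 : PH H p₂ = PH H q₂ := by rw [← hPp, key1, hQq]
  rw [mem_fiber_iff]
  refine ⟨(2⁻¹ : ℝ) • (p₁ + reflMap H q₁), (2⁻¹ : ℝ) • (p₂ + reflMap H q₂), ?_, ?_, ?_, ?_⟩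
  · rw [mem_fiber_iff]; exact ⟨p₁, q₁, hp₁, hq₁, key1, rfl⟩
  · rw [mem_fiber_iff]; exact ⟨p₂, q₂, hp₂, hq₂, key2, rfl⟩
  · -- PH L c = PH L d
    have hq2 : q₁ - ⟪e, q₁⟫ • e = q₂ - ⟪e, q₂⟫ • e := by
      have := hq; rwa [PH_line e he, PH_line e he] at this
    have RQ : reflMap H q₁ + ⟪e, q₁⟫ • e = reflMap H q₂ + ⟪e, q₂⟫ • e := by
      have h3 := congrArg (reflMap H) hq2
      rw [reflMap_sub, reflMap_sub, reflMap_smul, reflMap_smul, reflMap_orthmem H heH,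
        smul_neg, smul_neg, sub_neg_eq_add, sub_neg_eq_add] at h3
      exact h3
    rw [PH_smul, PH_smul, PH_add, PH_add, hp, PH_line_reflMap H he heH,
      PH_line_reflMap H he heH, RQ]
  · -- the displayed equation
    rw [reflMap_smul H, reflMap_add H, reflMap_smul (ℝ ∙ e)ᗮ, reflMap_add (ℝ ∙ e)ᗮ,
      reflMap_comm H he heH q₂]
    module

lemma reflMap_mem_fiber (H : Submodule ℝ (Euc n)) {K : Set (Euc n)} {z : Euc n}
    (hz : z ∈ fiber H K) : reflMap H z ∈ fiber H K := by
  rw [mem_fiber_iff] at hz ⊢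
  obtain ⟨a, b, ha, hb, hab, rfl⟩ := hz
  refine ⟨b, a, hb, ha, hab.symm, ?_⟩
  rw [reflMap_smul, reflMap_add, reflMap_reflMap, add_comm]

lemma reflMap_line_comm {e f : Euc n} (he : ‖e‖ = 1) (hf : ‖f‖ = 1) (hef : ⟪e, f⟫ = 0)
    (y : Euc n) : reflMap (ℝ ∙ e)ᗮ (reflMap (ℝ ∙ f)ᗮ y) =
      reflMap (ℝ ∙ f)ᗮ (reflMap (ℝ ∙ e)ᗮ y) := by
  have hef' : ⟪f, e⟫ = (0 : ℝ) := by rw [real_inner_comm]; exact hef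
  rw [reflMap_line f hf y, reflMap_line e he y, reflMap_line e he, reflMap_line f hf]
  simp only [inner_sub_right, real_inner_smul_right, hef, hef', mul_zero, zero_mul, sub_zero]
  module

lemma PH_line_comm {e f : Euc n} (he : ‖e‖ = 1) (hf : ‖f‖ = 1) (hef : ⟪e, f⟫ = 0)
    (y : Euc n) : PH (ℝ ∙ e)ᗮ (reflMap (ℝ ∙ f)ᗮ y) =
      reflMap (ℝ ∙ f)ᗮ (PH (ℝ ∙ e)ᗮ y) := by
  have hef' : ⟪f, e⟫ = (0 : ℝ) := by rw [real_inner_comm]; exact hef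
  rw [PH_line e he, reflMap_line f hf y, reflMap_line f hf, PH_line e he]
  simp only [inner_sub_right, real_inner_smul_right, hef, hef', mul_zero, zero_mul, sub_zero]
  module

lemma mem_fiber_symm {e f : Euc n} (he : ‖e‖ = 1) (hf : ‖f‖ = 1) (hef : ⟪e, f⟫ = 0)
    {K : Set (Euc n)} (hKf : ∀ y ∈ K, reflMap (ℝ ∙ f)ᗮ y ∈ K) {z : Euc n}
    (hz : z ∈ fiber (ℝ ∙ e)ᗮ K) : reflMap (ℝ ∙ f)ᗮ z ∈ fiber (ℝ ∙ e)ᗮ K := by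
  rw [mem_fiber_iff] at hz ⊢
  obtain ⟨a, b, ha, hb, hab, rfl⟩ := hz
  refine ⟨reflMap (ℝ ∙ f)ᗮ a, reflMap (ℝ ∙ f)ᗮ b, hKf a ha, hKf b hb, ?_, ?_⟩
  · rw [PH_line_comm he hf hef, PH_line_comm he hf hef, hab]
  · rw [reflMap_smul, reflMap_add, reflMap_line_comm he hf hef]

lemma subset_fiber_self (H : Submodule ℝ (Euc n)) {S : Set (Euc n)}
    (hinv : ∀ y ∈ S, reflMap H y ∈ S) : S ⊆ fiber H S := by
  intro y hy
  rw [mem_fiber_iff]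
  refine ⟨y, reflMap H y, hy, hinv y hy, ?_, ?_⟩
  · have h1 : reflMap H y = y - (2 : ℝ) • (orthogonalProjection Hᗮ y : Euc n) := by
      have h2 : reflMap H y = 2 • PH H y - y := reflection_apply y
      have h3 : (orthogonalProjection Hᗮ y : Euc n) = y - PH H y :=
        starProjection_orthogonal_val y
      have h4 : PH H y = y - (orthogonalProjection Hᗮ y : Euc n) := by rw [h3]; abel
      rw [h2, h4, two_smul, two_smul]
      abel
    rw [h1]
    have : PH H (y - (2 : ℝ) • (orthogonalProjection Hᗮ y : Euc n)) =
        PH H y - (2 : ℝ) • PH H (orthogonalProjection Hᗮ y : Euc n) := by simp [PH]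
    rw [this, PH_orth H (orthogonalProjection Hᗮ y).2, smul_zero, sub_zero]
  · rw [reflMap_reflMap, half_smul_add_self]

lemma reflMap_eq_sub_two_smul (H : Submodule ℝ (Euc n)) (y : Euc n) :
    reflMap H y = y - (2 : ℝ) • (orthogonalProjection Hᗮ y : Euc n) := by
  have h2 : reflMap H y = 2 • PH H y - y := reflection_apply y
  have h3 : (orthogonalProjection Hᗮ y : Euc n) = y - PH H y :=
    starProjection_orthogonal_val y
  have h4 : PH H y = y - (orthogonalProjection Hᗮ y : Euc n) := by rw [h3]; abel
  rw [h2, h4, two_smul, two_smul]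
  abel

lemma orthProj_orth_eq_sum (H : Submodule ℝ (Euc n))
    (b : OrthonormalBasis (Fin (Module.finrank ℝ Hᗮ)) ℝ Hᗮ) (y : Euc n) :
    (orthogonalProjection Hᗮ y : Euc n) = ∑ i, ⟪((b i : Hᗮ) : Euc n), y⟫ • ((b i : Hᗮ) : Euc n) := by
  have hv := b.sum_repr' (orthogonalProjection Hᗮ y)
  have hcast := congrArg (fun (w : Hᗮ) => (w : Euc n)) hv
  rw [← hcast]
  push_cast
  refine Finset.sum_congr rfl fun i _ => ?_
  congr 1
  rw [Submodule.coe_inner]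
  have horth : ⟪((b i : Hᗮ) : Euc n), y - (orthogonalProjection Hᗮ y : Euc n)⟫ = 0 := by
    have hmem : y - (orthogonalProjection Hᗮ y : Euc n) ∈ Hᗮᗮ :=
      sub_starProjection_mem_orthogonal y
    exact (Submodule.mem_orthogonal Hᗮ _).1 hmem _ (b i).2
  rw [inner_sub_right] at horth
  linarith

lemma mem_of_reflMap_chain {m : ℕ} (e : Fin m → Euc n)
    (hij : ∀ i j, i ≠ j → ⟪e i, e j⟫ = 0) {S : Set (Euc n)}
    (hinv : ∀ i, ∀ z ∈ S, reflMap (ℝ ∙ (e i))ᗮ z ∈ S) (hnorm : ∀ i, ‖e i‖ = 1) :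
    ∀ y ∈ S, (y - (2 : ℝ) • ∑ i, ⟪e i, y⟫ • e i) ∈ S := by
  intro y hy
  have key : ∀ t : Finset (Fin m), (y - (2 : ℝ) • ∑ i ∈ t, ⟪e i, y⟫ • e i) ∈ S := by
    intro t
    induction t using Finset.induction with
    | empty => simpa using hy
    | insert j t' hj ih =>
      have step := hinv j _ ih
      rw [reflMap_line (e j) (hnorm j)] at step
      have hin : ⟪e j, y - (2 : ℝ) • ∑ i ∈ t', ⟪e i, y⟫ • e i⟫ = ⟪e j, y⟫ := by
        rw [inner_sub_right, real_inner_smul_right, inner_sum]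
        have : ∀ i ∈ t', ⟪e j, ⟪e i, y⟫ • e i⟫ = 0 := by
          intro i hi
          rw [real_inner_smul_right, hij j i (by rintro rfl; exact hj hi), mul_zero]
        rw [Finset.sum_congr rfl this, Finset.sum_const_zero]
        ring
      rw [hin] at step
      have : y - (2 : ℝ) • ∑ i ∈ t', ⟪e i, y⟫ • e i - (2 * ⟪e j, y⟫) • e j =
          y - (2 : ℝ) • ∑ i ∈ insert j t', ⟪e i, y⟫ • e i := by
        rw [Finset.sum_insert hj, smul_add, mul_smul, smul_smul]
        abel
      rwa [this] at step
  exact key Finset.univ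

/-- If `S` is invariant under reflections along all vectors of an orthonormal basis of `Hᗮ`,
then `S` is invariant under `reflMap H`. -/
lemma reflMap_mem_of_basis_inv (H : Submodule ℝ (Euc n))
    (b : OrthonormalBasis (Fin (Module.finrank ℝ Hᗮ)) ℝ Hᗮ) {S : Set (Euc n)}
    (hinv : ∀ i, ∀ z ∈ S, reflMap (ℝ ∙ (((b i : Hᗮ)) : Euc n))ᗮ z ∈ S) :
    ∀ y ∈ S, reflMap H y ∈ S := by
  intro y hy
  have hnorm : ∀ i, ‖((b i : Hᗮ) : Euc n)‖ = 1 := by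
    intro i
    have h := b.orthonormal.1 i
    rwa [show ‖b i‖ = ‖((b i : Hᗮ) : Euc n)‖ from rfl] at h
  have hij : ∀ i j, i ≠ j → ⟪((b i : Hᗮ) : Euc n), ((b j : Hᗮ) : Euc n)⟫ = 0 := by
    intro i j hne
    have h := b.orthonormal.2 hne
    dsimp only at h
    rwa [Submodule.coe_inner] at h
  have := mem_of_reflMap_chain (fun i => ((b i : Hᗮ) : Euc n)) hij hinv hnorm y hy
  rwa [reflMap_eq_sub_two_smul, orthProj_orth_eq_sum H b]

lemma volume_sym_interval {A : Set ℝ} (hA : IsCompact A) (hconv : Convex ℝ A) :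
    volume {s : ℝ | ∃ t₁ ∈ A, ∃ t₂ ∈ A, s = (t₁ - t₂) / 2} = volume A := by
  rcases A.eq_empty_or_nonempty with rfl | hne
  · simp
  · have hIcc : A = Set.Icc (sInf A) (sSup A) :=
      eq_Icc_of_connected_compact ⟨hne, hconv.isPreconnected⟩ hA
    set a := sInf A
    set b := sSup A
    have hab : a ≤ b := by
      obtain ⟨x, hx⟩ := hne
      rw [hIcc] at hx
      exact le_trans hx.1 hx.2
    have hT : {s : ℝ | ∃ t₁ ∈ A, ∃ t₂ ∈ A, s = (t₁ - t₂) / 2} =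
        Set.Icc ((a - b) / 2) ((b - a) / 2) := by
      ext s
      simp only [Set.mem_setOf_eq, Set.mem_Icc]
      constructor
      · rintro ⟨t₁, ht₁, t₂, ht₂, rfl⟩
        rw [hIcc] at ht₁ ht₂
        obtain ⟨h1, h2⟩ := ht₁
        obtain ⟨h3, h4⟩ := ht₂
        constructor <;> linarith
      · rintro ⟨h1, h2⟩
        rcases le_or_gt 0 s with hs | hs
        · refine ⟨a + 2 * s, ?_, a, ?_, by ring⟩
          · rw [hIcc]; exact ⟨by linarith, by linarith⟩
          · rw [hIcc]; exact ⟨le_refl a, hab⟩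
        · refine ⟨a, ?_, a - 2 * s, ?_, by ring⟩
          · rw [hIcc]; exact ⟨le_refl a, hab⟩
          · rw [hIcc]; exact ⟨by linarith, by linarith⟩
    rw [hT, hIcc, Real.volume_Icc, Real.volume_Icc]
    congr 1
    ring

lemma mem_span_orth_orth (e : Euc n) : e ∈ ((ℝ ∙ e)ᗮ)ᗮ :=
  (Submodule.le_orthogonal_orthogonal (ℝ ∙ e)) (Submodule.mem_span_singleton_self e)

lemma inner_self_one {e : Euc n} (he : ‖e‖ = 1) : ⟪e, e⟫ = (1 : ℝ) := by
  rw [real_inner_self_eq_norm_sq, he, one_pow]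

lemma PH_line_refl_self {e : Euc n} (he : ‖e‖ = 1) (y : Euc n) :
    PH (ℝ ∙ e)ᗮ (reflMap (ℝ ∙ e)ᗮ y) = PH (ℝ ∙ e)ᗮ y := by
  rw [reflMap_line e he y, PH_line e he, PH_line e he]
  simp only [inner_sub_right, real_inner_smul_right, inner_self_one he, mul_one]
  module

lemma inner_line_pt {e : Euc n} (he : ‖e‖ = 1) (g : Euc n) (hg : ⟪e, g⟫ = 0) (t : ℝ) :
    ⟪e, g + t • e⟫ = t := by
  rw [inner_add_right, real_inner_smul_right, hg, inner_self_one he]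
  ring

lemma slice_fiber_line {e : Euc n} (he : ‖e‖ = 1) (C : Set (Euc n)) (g : Euc n)
    (hg : ⟪e, g⟫ = 0) :
    {t : ℝ | g + t • e ∈ fiber (ℝ ∙ e)ᗮ C} =
      {s : ℝ | ∃ t₁ ∈ {t : ℝ | g + t • e ∈ C}, ∃ t₂ ∈ {t : ℝ | g + t • e ∈ C},
        s = (t₁ - t₂) / 2} := by
  have heL : e ∈ ((ℝ ∙ e)ᗮ)ᗮ := mem_span_orth_orth e
  have hPHpt : ∀ t : ℝ, PH (ℝ ∙ e)ᗮ (g + t • e) = g := by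
    intro t
    rw [PH_line e he, inner_line_pt he g hg]
    abel
  ext s
  simp only [Set.mem_setOf_eq]
  constructor
  · intro hz
    rw [mem_fiber_iff] at hz
    obtain ⟨a, b, ha, hb, hab, heq⟩ := hz
    have hPa : PH (ℝ ∙ e)ᗮ a = g := by
      have h1 := congrArg (PH (ℝ ∙ e)ᗮ) heq
      rw [hPHpt s, PH_smul, PH_add, PH_line_refl_self he, ← hab, half_smul_add_self] at h1
      exact h1.symm
    have hPb : PH (ℝ ∙ e)ᗮ b = g := by rw [← hab, hPa]
    have ha' : a = g + ⟪e, a⟫ • e := by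
      have h := PH_line e he a
      rw [hPa] at h
      rw [h]
      abel
    have hb' : b = g + ⟪e, b⟫ • e := by
      have h := PH_line e he b
      rw [hPb] at h
      rw [h]
      abel
    refine ⟨⟪e, a⟫, by rw [← ha']; exact ha, ⟪e, b⟫, by rw [← hb']; exact hb, ?_⟩
    have h2 := congrArg (fun w => ⟪e, w⟫) heq
    rw [inner_line_pt he g hg, real_inner_smul_right, inner_add_right,
      inner_e_reflMap (ℝ ∙ e)ᗮ heL] at h2
    rw [h2]; ring
  · rintro ⟨t₁, ht₁, t₂, ht₂, rfl⟩
    rw [mem_fiber_iff]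
    refine ⟨g + t₁ • e, g + t₂ • e, ht₁, ht₂, by rw [hPHpt, hPHpt], ?_⟩
    rw [reflMap_line e he, inner_line_pt he g hg]
    module

lemma slice_convex {C : Set (Euc n)} (hconv : Convex ℝ C) (g e : Euc n) :
    Convex ℝ {t : ℝ | g + t • e ∈ C} := by
  intro t₁ h₁ t₂ h₂ α β hα hβ hsum
  have key : g + (α • t₁ + β • t₂) • e = α • (g + t₁ • e) + β • (g + t₂ • e) := by
    have : α • (g + t₁ • e) + β • (g + t₂ • e) = (α + β) • g + (α * t₁ + β * t₂) • e := by
      module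
    rw [this, hsum, one_smul]
    norm_num
  show g + (α • t₁ + β • t₂) • e ∈ C
  rw [key]
  exact hconv h₁ h₂ hα hβ hsum

lemma slice_isCompact {C : Set (Euc n)} (hC : IsCompact C) {e : Euc n} (he : ‖e‖ = 1)
    (g : Euc n) (hg : ⟪e, g⟫ = 0) : IsCompact {t : ℝ | g + t • e ∈ C} := by
  obtain ⟨r, hr⟩ := hC.isBounded.subset_closedBall 0
  have hclosed : IsClosed {t : ℝ | g + t • e ∈ C} := by
    have : {t : ℝ | g + t • e ∈ C} = (fun t : ℝ => g + t • e) ⁻¹' C := rfl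
    rw [this]
    exact hC.isClosed.preimage (by fun_prop)
  refine IsCompact.of_isClosed_subset (isCompact_Icc (a := -r) (b := r)) hclosed ?_
  intro t ht
  have h1 : ‖g + t • e‖ ≤ r := by
    have := hr ht
    rwa [Metric.mem_closedBall, dist_zero_right] at this
  have h2 : |t| ≤ r := by
    have h3 : |⟪e, g + t • e⟫| ≤ ‖e‖ * ‖g + t • e‖ := abs_real_inner_le_norm e _
    rw [inner_line_pt he g hg, he, one_mul] at h3
    linarith
  exact abs_le.1 h2

lemma volume_fiber_line {m : ℕ} {e : Euc (m + 1)} (he : ‖e‖ = 1) {C : Set (Euc (m + 1))}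
    (hC : IsCompact C) (hconv : Convex ℝ C) :
    volume (fiber (ℝ ∙ e)ᗮ C) = volume C := by
  classical
  have hcard : Module.finrank ℝ (Euc (m + 1)) = Fintype.card (Fin (m + 1)) := by
    simp [finrank_euclideanSpace_fin]
  have horth : Orthonormal ℝ (({0} : Set (Fin (m + 1))).restrict (fun _ => e)) := by
    constructor
    · intro i
      rw [show ‖({0} : Set (Fin (m+1))).restrict (fun _ => e) i‖ = ‖e‖ from rfl, he]
    · intro i j hij
      exfalso
      apply hij
      have hi := i.2
      have hj := j.2
      simp only [Set.mem_singleton_iff] at hi hj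
      exact Subtype.ext (hi.trans hj.symm)
  obtain ⟨b, hb⟩ := horth.exists_orthonormalBasis_extension_of_card_eq hcard
  have hb0 : b 0 = e := hb 0 rfl
  set M : Euc (m + 1) ≃ᵐ ℝ × (Fin m → ℝ) :=
    (b.measurableEquiv.trans (MeasurableEquiv.toLp 2 (Fin (m + 1) → ℝ)).symm).trans
      (MeasurableEquiv.piFinSuccAbove (fun _ => ℝ) 0) with hMdef
  have hM : MeasurePreserving M volume volume := by
    have h1 := b.measurePreserving_measurableEquiv
    have h2 := EuclideanSpace.volume_preserving_symm_measurableEquiv_toLp (Fin (m + 1))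
    have h3 := measurePreserving_piFinSuccAbove (fun _ : Fin (m + 1) => (volume : Measure ℝ)) 0
    exact (h3.comp (h2.comp h1) : _)
  have hms : ∀ (t : ℝ) (y : Fin m → ℝ), M.symm (t, y) =
      b.repr.symm (WithLp.toLp 2 (Fin.insertNth 0 t y)) :=
    fun t y => rfl
  have hcons : ∀ (t : ℝ) (y : Fin m → ℝ), Fin.cons (α := fun _ => ℝ) t y =
      Fin.cons (α := fun _ => ℝ) (0 : ℝ) y + t • (Pi.single 0 1 : Fin (m + 1) → ℝ) := by
    intro t y
    funext i
    refine Fin.cases ?_ ?_ i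
    · simp
    · intro j
      simp [Pi.single_eq_of_ne (Fin.succ_ne_zero j)]
  set g : (Fin m → ℝ) → Euc (m + 1) := fun y =>
    b.repr.symm (WithLp.toLp 2 (Fin.cons (0 : ℝ) y)) with hgdef
  have hMsymm : ∀ (t : ℝ) (y : Fin m → ℝ), M.symm (t, y) = g y + t • e := by
    intro t y
    rw [hms t y, Fin.insertNth_zero', hcons t y, WithLp.toLp_add, WithLp.toLp_smul,
      map_add, LinearIsometryEquiv.map_smul, PiLp.toLp_single, OrthonormalBasis.repr_symm_single, hb0,
      hgdef]
  have hgy : ∀ y : Fin m → ℝ, ⟪e, g y⟫ = 0 := by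
    intro y
    rw [hgdef]
    simp only
    rw [← hb0, ← OrthonormalBasis.repr_apply_apply, LinearIsometryEquiv.apply_symm_apply,
      PiLp.toLp_apply]
    simp
  have key : ∀ S : Set (Euc (m + 1)), MeasurableSet S →
      volume S = ∫⁻ y, volume {t : ℝ | M.symm (t, y) ∈ S} := by
    intro S hS
    have h5 : volume (M.symm ⁻¹' S) = volume S :=
      (MeasurePreserving.symm M hM).measure_preimage hS.nullMeasurableSet
    rw [← h5]
    have h6 : MeasurableSet (M.symm ⁻¹' S) := M.symm.measurable hS
    rw [show (volume : Measure (ℝ × (Fin m → ℝ))) = (volume : Measure ℝ).prod volume from rfl,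
      Measure.prod_apply_symm h6]
    rfl
  rw [key _ (isCompact_fiber _ hC).measurableSet, key _ hC.measurableSet]
  refine lintegral_congr fun y => ?_
  have hset1 : {t : ℝ | M.symm (t, y) ∈ fiber (ℝ ∙ e)ᗮ C} =
      {t : ℝ | g y + t • e ∈ fiber (ℝ ∙ e)ᗮ C} := by
    ext t; rw [Set.mem_setOf_eq, Set.mem_setOf_eq, hMsymm]
  have hset2 : {t : ℝ | M.symm (t, y) ∈ C} = {t : ℝ | g y + t • e ∈ C} := by
    ext t; rw [Set.mem_setOf_eq, Set.mem_setOf_eq, hMsymm]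
  rw [hset1, hset2, slice_fiber_line he C (g y) (hgy y)]
  exact volume_sym_interval (slice_isCompact hC he (g y) (hgy y)) (slice_convex hconv (g y) e)

lemma volume_fiber_line' {e : Euc n} (he : ‖e‖ = 1) {C : Set (Euc n)}
    (hC : IsCompact C) (hconv : Convex ℝ C) :
    volume (fiber (ℝ ∙ e)ᗮ C) = volume C := by
  have hn : n ≠ 0 := by
    rintro rfl
    have h0 : e = 0 := Subsingleton.elim _ _
    rw [h0, norm_zero] at he
    norm_num at he
  obtain ⟨m, rfl⟩ := Nat.exists_eq_succ_of_ne_zero hn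
  exact volume_fiber_line he hC hconv

/-- Iterated 1-dimensional fiber symmetrizations along the directions `e i`. -/
def iterFib {k : ℕ} (e : Fin k → Euc n) (K : Set (Euc n)) : ℕ → Set (Euc n)
  | 0 => K
  | j + 1 => if h : j < k then fiber (ℝ ∙ (e ⟨j, h⟩))ᗮ (iterFib e K j) else iterFib e K j

lemma iterFib_props {k : ℕ} (e : Fin k → Euc n) (hnorm : ∀ i, ‖e i‖ = 1)
    (hij : ∀ i j, i ≠ j → ⟪e i, e j⟫ = 0) {K : Set (Euc n)}
    (hC : IsCompact K) (hconv : Convex ℝ K) :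
    ∀ j, IsCompact (iterFib e K j) ∧ Convex ℝ (iterFib e K j) ∧
      volume (iterFib e K j) = volume K ∧
      ∀ i : Fin k, (i : ℕ) < j → ∀ z ∈ iterFib e K j,
        reflMap (ℝ ∙ e i)ᗮ z ∈ iterFib e K j := by
  intro j
  induction j with
  | zero => exact ⟨hC, hconv, rfl, fun i hi => by omega⟩
  | succ j ih =>
    obtain ⟨ihC, ihconv, ihvol, ihinv⟩ := ih
    by_cases h : j < k
    · have hunf : iterFib e K (j + 1) = fiber (ℝ ∙ (e ⟨j, h⟩))ᗮ (iterFib e K j) := by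
        rw [iterFib, dif_pos h]
      rw [hunf]
      refine ⟨isCompact_fiber _ ihC, convex_fiber _ ihconv,
        (volume_fiber_line' (hnorm _) ihC ihconv).trans ihvol, ?_⟩
      intro i hi z hz
      rcases eq_or_ne i ⟨j, h⟩ with rfl | hne
      · exact reflMap_mem_fiber _ hz
      · have hilt : (i : ℕ) < j := by
          rcases Nat.lt_succ_iff_lt_or_eq.1 hi with h' | h'
          · exact h'
          · exact absurd (Fin.ext h') hne
        exact mem_fiber_symm (hnorm ⟨j, h⟩) (hnorm i) (hij _ _ (Ne.symm hne))
          (fun y hy => ihinv i hilt y hy) hz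
    · have hunf : iterFib e K (j + 1) = iterFib e K j := by rw [iterFib, dif_neg h]
      rw [hunf]
      refine ⟨ihC, ihconv, ihvol, ?_⟩
      intro i hi z hz
      exact ihinv i (by omega) z hz

lemma iterFib_fiber_subset {k : ℕ} (H : Submodule ℝ (Euc n)) (e : Fin k → Euc n)
    (hnorm : ∀ i, ‖e i‖ = 1) (hmem : ∀ i, e i ∈ Hᗮ) (K : Set (Euc n)) :
    ∀ j, fiber H (iterFib e K j) ⊆ iterFib e (fiber H K) j := by
  intro j
  induction j with
  | zero => exact le_refl _
  | succ j ih =>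
    by_cases h : j < k
    · rw [show iterFib e K (j + 1) = fiber (ℝ ∙ (e ⟨j, h⟩))ᗮ (iterFib e K j) from by
        rw [iterFib, dif_pos h],
        show iterFib e (fiber H K) (j + 1) =
          fiber (ℝ ∙ (e ⟨j, h⟩))ᗮ (iterFib e (fiber H K) j) from by rw [iterFib, dif_pos h]]
      exact (fiber_fiber_subset H (hnorm _) (hmem _) _).trans (fiber_mono _ ih)
    · rw [show iterFib e K (j + 1) = iterFib e K j from by rw [iterFib, dif_neg h],
        show iterFib e (fiber H K) (j + 1) = iterFib e (fiber H K) j from by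
          rw [iterFib, dif_neg h]]
      exact ih

/-- Fiber symmetrization does not decrease the Lebesgue measure of a convex body. -/
theorem stmt8 {n : ℕ} (hn : 2 ≤ n)
    (H : Submodule ℝ (Euc n)) (hb : H ≠ ⊥) (ht : H ≠ ⊤)
    (K : Set (Euc n)) (hK : IsConvexBody K) :
    volume K ≤ volume (fiber H K) := by
  obtain ⟨hne, hC, hconv⟩ := hK
  classical
  set k := Module.finrank ℝ Hᗮ with hk
  set b := stdOrthonormalBasis ℝ (Hᗮ : Submodule ℝ (Euc n)) with hbdef
  set e : Fin k → Euc n := fun i => ((b i : Hᗮ) : Euc n) with hedef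
  have hnorm : ∀ i, ‖e i‖ = 1 := by
    intro i
    have h := b.orthonormal.1 i
    rwa [show ‖b i‖ = ‖e i‖ from rfl] at h
  have hij : ∀ i j, i ≠ j → ⟪e i, e j⟫ = 0 := by
    intro i j hne'
    have h := b.orthonormal.2 hne'
    dsimp only at h
    rwa [Submodule.coe_inner] at h
  have hmem : ∀ i, e i ∈ Hᗮ := fun i => (b i).2
  obtain ⟨hkC, hkconv, hkvol, hkinv⟩ := iterFib_props e hnorm hij hC hconv k
  -- the fully symmetrized body is invariant under `reflMap H`
  have hsym : ∀ y ∈ iterFib e K k, reflMap H y ∈ iterFib e K k := by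
    refine reflMap_mem_of_basis_inv H b ?_
    intro i z hz
    exact hkinv i i.2 z hz
  -- chain of inclusions
  have h1 : iterFib e K k ⊆ fiber H (iterFib e K k) := subset_fiber_self H hsym
  have h2 : fiber H (iterFib e K k) ⊆ iterFib e (fiber H K) k :=
    iterFib_fiber_subset H e hnorm hmem K k
  obtain ⟨hfC, hfconv, hfvol, _⟩ := iterFib_props e hnorm hij
    (isCompact_fiber H hC) (convex_fiber H hconv) k
  calc volume K = volume (iterFib e K k) := hkvol.symm
    _ ≤ volume (iterFib e (fiber H K) k) := measure_mono (h1.trans h2)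
    _ = volume (fiber H K) := hfvol
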